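/- arXiv:2204.13891 — 2 statements merged into one kernel-verified Lean document; each statement's English description precedes it below -/
import Mathlib

section
/- For all z ∈ ℂ and all q ∈ ℕ, |G₄(z,q)| ≤ 2^{ω(q)} τ₄(q) ∏_{p | q} (1 + p^{−Re(z)})³ (1 + p^{Re(z)−1}), where ω(q) is the number of distinct prime factors of q. Moreover, if 1 − r ≤ Re(z) ≤ 1 + r for some r ∈ (0,1), then |G₄(z,q)| ≤ 32^{ω(q)} τ₄(q) q^r. -/
open Complex Filter Topology

noncomputable section

/-- The 4-fold divisor function: number of quadruples with product `n`. -/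
def tau4 (n : ℕ) : ℕ :=
  Nat.card {p : ℕ × ℕ × ℕ × ℕ // p.1 * p.2.1 * p.2.2.1 * p.2.2.2 = n}

/-- Ramanujan sum `c_q(r)`. -/
def ramanujanSum (q : ℕ) (r : ℤ) : ℂ :=
  ∑ d ∈ (Finset.range q).filter (fun d => Nat.Coprime d q),
    Complex.exp (-(2 * Real.pi * Complex.I * d * r) / q)

/-- The cubic polynomial `Q_j`. -/
def Qpoly (j : ℕ) (x : ℂ) : ℂ :=
  1 - (3*j/(j+1) : ℂ) * x + (3*j/(j+2) : ℂ) * x^2 - (j/(j+3) : ℂ) * x^3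

/-- The multiplicative function `g₄(z,·)` determined by
`∑_m τ₄(nm) m^{-z} = g₄(z,n) ζ(z)⁴`; on prime powers `g₄(z,p^α) = τ₄(p^α) Q_α(p^{-z})`. -/
def g4 (z : ℂ) (n : ℕ) : ℂ :=
  ∏ p ∈ n.primeFactors,
    (tau4 (p ^ (n.factorization p)) : ℂ) * Qpoly (n.factorization p) ((p:ℂ) ^ (-z))

/-- The function `G₄(z,n)`. -/
def G4 (z : ℂ) (n : ℕ) : ℂ :=
  ∑ d ∈ n.divisors, ((ArithmeticFunction.moebius d : ℤ) : ℂ) * (d:ℂ)^z / (Nat.totient d : ℂ) *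
    ∑ e ∈ d.divisors, ((ArithmeticFunction.moebius e : ℤ) : ℂ) / (e:ℂ)^z * g4 z (n * e / d)

/-! ### Auxiliary development -/

open Finset ArithmeticFunction
open scoped ArithmeticFunction.sigma ArithmeticFunction.zeta ArithmeticFunction.Moebius

/-- Explicit finset of quadruples with product `n`. -/
def quadSet (n : ℕ) : Finset (ℕ × ℕ × ℕ × ℕ) :=
  (n.divisorsAntidiagonal).biUnion (fun ab =>
    (ab.1.divisorsAntidiagonal ×ˢ ab.2.divisorsAntidiagonal).image
      (fun x => (x.1.1, x.1.2, x.2.1, x.2.2)))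

lemma mem_quadSet {n : ℕ} (hn : n ≠ 0) (p : ℕ × ℕ × ℕ × ℕ) :
    p ∈ quadSet n ↔ p.1 * p.2.1 * p.2.2.1 * p.2.2.2 = n := by
  simp only [quadSet, Finset.mem_biUnion, Finset.mem_image, Finset.mem_product,
    Nat.mem_divisorsAntidiagonal]
  constructor
  · rintro ⟨ab, ⟨hab, -⟩, x, ⟨⟨h1, -⟩, h2, -⟩, rfl⟩
    simp only
    rw [show x.1.1 * x.1.2 * x.2.1 * x.2.2 = (x.1.1 * x.1.2) * (x.2.1 * x.2.2) by ring,
      h1, h2, hab]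
  · intro h
    have key : (p.1 * p.2.1) * (p.2.2.1 * p.2.2.2) = n := by rw [← h]; ring
    have h1 : p.1 * p.2.1 ≠ 0 := by
      intro h0; apply hn; rw [← key, h0, zero_mul]
    have h2 : p.2.2.1 * p.2.2.2 ≠ 0 := by
      intro h0; apply hn; rw [← key, h0, mul_zero]
    exact ⟨(p.1 * p.2.1, p.2.2.1 * p.2.2.2), ⟨key, hn⟩,
      ((p.1, p.2.1), (p.2.2.1, p.2.2.2)), ⟨⟨rfl, h1⟩, rfl, h2⟩, rfl⟩

lemma tau4_eq_card {n : ℕ} (hn : n ≠ 0) : tau4 n = (quadSet n).card := by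
  rw [tau4, ← Nat.card_eq_finsetCard]
  exact Nat.card_congr (Equiv.subtypeEquivRight (fun p => (mem_quadSet hn p).symm))

lemma quad_finite {n : ℕ} (hn : n ≠ 0) :
    Finite {p : ℕ × ℕ × ℕ × ℕ // p.1 * p.2.1 * p.2.2.1 * p.2.2.2 = n} :=
  Finite.of_equiv _ (Equiv.subtypeEquivRight (fun p => (mem_quadSet hn p)))

lemma tau4_eq_sigma {n : ℕ} (hn : n ≠ 0) :
    tau4 n = (σ 0 * σ 0 : ArithmeticFunction ℕ) n := by
  have hinj : Function.Injective
      (fun x : (ℕ × ℕ) × ℕ × ℕ => (x.1.1, x.1.2, x.2.1, x.2.2)) := by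
    rintro ⟨⟨a, b⟩, c, d⟩ ⟨⟨a', b'⟩, c', d'⟩ h
    simp only [Prod.mk.injEq] at h
    obtain ⟨h1, h2, h3, h4⟩ := h
    simp_all
  rw [tau4_eq_card hn, ArithmeticFunction.mul_apply, quadSet, Finset.card_biUnion]
  · apply Finset.sum_congr rfl
    intro ab _
    rw [Finset.card_image_of_injective _ hinj, Finset.card_product, sigma_zero_apply,
      sigma_zero_apply, ← Nat.map_div_right_divisors, ← Nat.map_div_right_divisors,
      Finset.card_map, Finset.card_map]
  · intro x hx y hy hxy
    rw [Function.onFun, Finset.disjoint_left]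
    rintro p hp hp'
    apply hxy
    simp only [Finset.mem_image, Finset.mem_product, Nat.mem_divisorsAntidiagonal] at hp hp'
    obtain ⟨u, ⟨⟨hu1, -⟩, hu2, -⟩, hup⟩ := hp
    obtain ⟨v, ⟨⟨hv1, -⟩, hv2, -⟩, hvp⟩ := hp'
    have : u = v := by
      rw [← hvp] at hup
      exact hinj hup
    subst this
    ext
    · rw [← hu1, ← hv1]
    · rw [← hu2, ← hv2]

lemma tau4_factorization {n : ℕ} (hn : n ≠ 0) :
    tau4 n = ∏ p ∈ n.primeFactors, tau4 (p ^ n.factorization p) := by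
  rw [tau4_eq_sigma hn,
    (ArithmeticFunction.isMultiplicative_sigma.mul
      ArithmeticFunction.isMultiplicative_sigma).multiplicative_factorization _ hn,
    Nat.prod_factorization_eq_prod_primeFactors]
  apply Finset.prod_congr rfl
  intro p hp
  rw [tau4_eq_sigma]
  exact pow_ne_zero _ (Nat.prime_of_mem_primeFactors hp).ne_zero

lemma tau4_le_of_dvd {m n : ℕ} (h : m ∣ n) (hn : n ≠ 0) : tau4 m ≤ tau4 n := by
  obtain ⟨k, rfl⟩ := h
  have hk : k ≠ 0 := by rintro rfl; exact hn (mul_zero m)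
  haveI := quad_finite hn
  apply Nat.card_le_card_of_injective
    (fun p => (⟨(p.1.1 * k, p.1.2.1, p.1.2.2.1, p.1.2.2.2), by
      have := p.2; dsimp only; rw [show p.1.1 * k * p.1.2.1 * p.1.2.2.1 * p.1.2.2.2
        = p.1.1 * p.1.2.1 * p.1.2.2.1 * p.1.2.2.2 * k by ring, this]⟩ :
      {p : ℕ × ℕ × ℕ × ℕ // p.1 * p.2.1 * p.2.2.1 * p.2.2.2 = m * k}))
  rintro ⟨⟨a, b, c, d⟩, hp⟩ ⟨⟨a', b', c', d'⟩, hq⟩ h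
  simp only [Subtype.mk.injEq, Prod.mk.injEq] at h
  obtain ⟨h1, h2, h3, h4⟩ := h
  have : a = a' := Nat.eq_of_mul_eq_mul_right (Nat.pos_of_ne_zero hk) h1
  subst this; subst h2; subst h3; subst h4; rfl

lemma abs_Qpoly_le (j : ℕ) (x : ℂ) : ‖Qpoly j x‖ ≤ (1 + ‖x‖)^3 := by
  have hx : 0 ≤ ‖x‖ := norm_nonneg x
  have habs : ∀ (c k : ℕ), 0 < k → ‖(c:ℂ)*(j:ℂ)/((j:ℂ)+(k:ℂ))‖ ≤ (c:ℝ) := by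
    intro c k hk
    have h1 : ((c:ℂ)*(j:ℂ)/((j:ℂ)+(k:ℂ))) = (((c*j : ℕ):ℂ))/(((j+k:ℕ):ℂ)) := by
      push_cast; ring
    rw [h1, norm_div, Complex.norm_natCast, Complex.norm_natCast]
    rw [div_le_iff₀ (by exact_mod_cast Nat.add_pos_right j hk)]
    exact_mod_cast Nat.mul_le_mul_left c (Nat.le_add_right j k)
  have b1 : ‖3*(j:ℂ)/((j:ℂ)+1)‖ ≤ 3 := by
    have := habs 3 1 one_pos; push_cast at this; exact this
  have b2 : ‖3*(j:ℂ)/((j:ℂ)+2)‖ ≤ 3 := by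
    have := habs 3 2 two_pos; push_cast at this; exact this
  have b3 : ‖(j:ℂ)/((j:ℂ)+3)‖ ≤ 1 := by
    have := habs 1 3 (by norm_num); push_cast at this; simpa using this
  rw [Qpoly]
  set a1 := (3*(j:ℂ)/((j:ℂ)+1)) with ha1
  set a2 := (3*(j:ℂ)/((j:ℂ)+2)) with ha2
  set a3 := ((j:ℂ)/((j:ℂ)+3)) with ha3
  have h1 : ‖1 - a1*x + a2*x^2 - a3*x^3‖ ≤ ‖1 - a1*x + a2*x^2‖ + ‖a3*x^3‖ := norm_sub_le _ _
  have h2 : ‖1 - a1*x + a2*x^2‖ ≤ ‖1 - a1*x‖ + ‖a2*x^2‖ := norm_add_le _ _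
  have h3 : ‖1 - a1*x‖ ≤ ‖(1:ℂ)‖ + ‖a1*x‖ := norm_sub_le _ _
  have e1 : ‖a1*x‖ ≤ 3 * ‖x‖ := by
    rw [norm_mul]
    exact mul_le_mul_of_nonneg_right b1 hx
  have e2 : ‖a2*x^2‖ ≤ 3 * (‖x‖)^2 := by
    rw [norm_mul, norm_pow]
    exact mul_le_mul_of_nonneg_right b2 (by positivity)
  have e3 : ‖a3*x^3‖ ≤ 1 * (‖x‖)^3 := by
    rw [norm_mul, norm_pow]
    exact mul_le_mul_of_nonneg_right b3 (by positivity)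
  have hone : ‖(1:ℂ)‖ = 1 := norm_one
  nlinarith [sq_nonneg (‖x‖), pow_nonneg hx 3]

lemma abs_g4_le (z : ℂ) {m : ℕ} (hm : m ≠ 0) :
    ‖g4 z m‖ ≤ (tau4 m : ℝ) * ∏ p ∈ m.primeFactors, (1 + (p:ℝ) ^ (-z.re))^3 := by
  rw [g4, norm_prod]
  have step : ∀ p ∈ m.primeFactors,
      ‖(tau4 (p ^ m.factorization p) : ℂ) *
        Qpoly (m.factorization p) ((p:ℂ) ^ (-z))‖
        ≤ (tau4 (p ^ m.factorization p) : ℝ) * (1 + (p:ℝ) ^ (-z.re))^3 := by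
    intro p hp
    have hpp := Nat.prime_of_mem_primeFactors hp
    have hpos : (0:ℝ) < (p:ℝ) := by exact_mod_cast hpp.pos
    rw [norm_mul, Complex.norm_natCast]
    have habs : ‖(p:ℂ) ^ (-z)‖ = (p:ℝ) ^ (-z.re) := by
      rw [show ((p:ℂ)) = (((p:ℝ)):ℂ) from (Complex.ofReal_natCast p).symm,
        Complex.norm_cpow_eq_rpow_re_of_pos hpos, Complex.neg_re]
    refine mul_le_mul_of_nonneg_left ?_ (Nat.cast_nonneg _)
    calc ‖Qpoly (m.factorization p) ((p:ℂ) ^ (-z))‖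
        ≤ (1 + ‖(p:ℂ) ^ (-z)‖)^3 := abs_Qpoly_le _ _
      _ = (1 + (p:ℝ) ^ (-z.re))^3 := by rw [habs]
  calc ∏ p ∈ m.primeFactors, ‖(tau4 (p ^ m.factorization p) : ℂ) *
        Qpoly (m.factorization p) ((p:ℂ) ^ (-z))‖
      ≤ ∏ p ∈ m.primeFactors, (tau4 (p ^ m.factorization p) : ℝ) * (1 + (p:ℝ) ^ (-z.re))^3 :=
        Finset.prod_le_prod (fun i _ => norm_nonneg _) step
    _ = (∏ p ∈ m.primeFactors, (tau4 (p ^ m.factorization p) : ℝ)) *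
        ∏ p ∈ m.primeFactors, (1 + (p:ℝ) ^ (-z.re))^3 := Finset.prod_mul_distrib
    _ = (tau4 m : ℝ) * ∏ p ∈ m.primeFactors, (1 + (p:ℝ) ^ (-z.re))^3 := by
        rw [← Nat.cast_prod, ← tau4_factorization hm]

lemma abs_g4_le_of_dvd (z : ℂ) {m q : ℕ} (hq : q ≠ 0) (hd : m ∣ q) :
    ‖g4 z m‖ ≤ (tau4 q : ℝ) * ∏ p ∈ q.primeFactors, (1 + (p:ℝ) ^ (-z.re))^3 := by
  have hm : m ≠ 0 := ne_zero_of_dvd_ne_zero hq hd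
  refine (abs_g4_le z hm).trans ?_
  have h1 : (tau4 m : ℝ) ≤ (tau4 q : ℝ) := by exact_mod_cast tau4_le_of_dvd hd hq
  have h2 : (∏ p ∈ m.primeFactors, (1 + (p:ℝ) ^ (-z.re))^3)
      ≤ ∏ p ∈ q.primeFactors, (1 + (p:ℝ) ^ (-z.re))^3 := by
    rw [← Finset.prod_sdiff (Nat.primeFactors_mono hd hq)]
    have hone : (1:ℝ) ≤ ∏ p ∈ q.primeFactors \ m.primeFactors, (1 + (p:ℝ) ^ (-z.re))^3 := by
      calc (1:ℝ) = ∏ p ∈ q.primeFactors \ m.primeFactors, 1 := by rw [Finset.prod_const_one]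
        _ ≤ ∏ p ∈ q.primeFactors \ m.primeFactors, (1 + (p:ℝ) ^ (-z.re))^3 := by
            apply Finset.prod_le_prod (fun i _ => zero_le_one)
            intro p _
            have h := Real.rpow_nonneg (Nat.cast_nonneg p) (-z.re)
            nlinarith [pow_nonneg h 2, pow_nonneg h 3, sq_nonneg ((p:ℝ) ^ (-z.re))]
    exact le_mul_of_one_le_left
      (Finset.prod_nonneg fun p _ => by positivity) hone
  have h3 : (0:ℝ) ≤ ∏ p ∈ m.primeFactors, (1 + (p:ℝ) ^ (-z.re))^3 :=
    Finset.prod_nonneg fun p _ => by positivity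
  exact mul_le_mul h1 h2 h3 (Nat.cast_nonneg _)

/-- `d ↦ d^s / φ(d)` supported on squarefree numbers. -/
def Af (s : ℝ) : ArithmeticFunction ℝ :=
  ⟨fun d => if Squarefree d then (d:ℝ) ^ s / (Nat.totient d : ℝ) else 0, by
    simp [not_squarefree_zero]⟩

/-- `e ↦ e^{-s}` supported on squarefree numbers. -/
def Bf (s : ℝ) : ArithmeticFunction ℝ :=
  ⟨fun e => if Squarefree e then (e:ℝ) ^ (-s) else 0, by simp [not_squarefree_zero]⟩

variable {s : ℝ}

lemma Af_apply (d : ℕ) : Af s d = if Squarefree d then (d:ℝ) ^ s / (Nat.totient d : ℝ) else 0 :=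
  rfl

lemma Bf_apply (e : ℕ) : Bf s e = if Squarefree e then (e:ℝ) ^ (-s) else 0 := rfl

lemma Af_nonneg (d : ℕ) : 0 ≤ Af s d := by
  rw [Af_apply]
  split_ifs
  · positivity
  · exact le_refl 0

lemma Bf_nonneg (e : ℕ) : 0 ≤ Bf s e := by
  rw [Bf_apply]; split_ifs
  · positivity
  · exact le_refl 0

lemma isMultiplicative_Af : (Af s).IsMultiplicative := by
  constructor
  · simp [Af_apply, squarefree_one, Real.one_rpow]
  · intro m n h
    by_cases hm : Squarefree m
    · by_cases hn : Squarefree n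
      · have hmn : Squarefree (m * n) := (Nat.squarefree_mul h).mpr ⟨hm, hn⟩
        simp only [Af_apply, if_pos hm, if_pos hn, if_pos hmn]
        rw [Nat.cast_mul, Real.mul_rpow (Nat.cast_nonneg m) (Nat.cast_nonneg n),
          Nat.totient_mul h, Nat.cast_mul, div_mul_div_comm]
      · have hmn : ¬ Squarefree (m * n) := fun hc => hn ((Nat.squarefree_mul h).mp hc).2
        simp [Af_apply, if_neg hn, if_neg hmn]
    · have hmn : ¬ Squarefree (m * n) := fun hc => hm ((Nat.squarefree_mul h).mp hc).1
      simp [Af_apply, if_neg hm, if_neg hmn]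

lemma isMultiplicative_Bf : (Bf s).IsMultiplicative := by
  constructor
  · simp [Bf_apply, squarefree_one, Real.one_rpow]
  · intro m n h
    by_cases hm : Squarefree m
    · by_cases hn : Squarefree n
      · have hmn : Squarefree (m * n) := (Nat.squarefree_mul h).mpr ⟨hm, hn⟩
        simp only [Bf_apply, if_pos hm, if_pos hn, if_pos hmn]
        rw [Nat.cast_mul, Real.mul_rpow (Nat.cast_nonneg m) (Nat.cast_nonneg n)]
      · have hmn : ¬ Squarefree (m * n) := fun hc => hn ((Nat.squarefree_mul h).mp hc).2
        simp [Bf_apply, if_neg hn, if_neg hmn]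
    · have hmn : ¬ Squarefree (m * n) := fun hc => hm ((Nat.squarefree_mul h).mp hc).1
      simp [Bf_apply, if_neg hm, if_neg hmn]

/-- The summand of the outer sum, as an arithmetic function. -/
def Ff (s : ℝ) : ArithmeticFunction ℝ := (Af s).pmul ((ζ : ArithmeticFunction ℝ) * Bf s)

lemma isMultiplicative_Ff : (Ff s).IsMultiplicative :=
  isMultiplicative_Af.pmul (isMultiplicative_zeta.natCast.mul isMultiplicative_Bf)

lemma Ff_apply (d : ℕ) : Ff s d = Af s d * ∑ e ∈ d.divisors, Bf s e := by
  rw [Ff, pmul_apply, coe_zeta_mul_apply]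

lemma Ff_prime_pow {p k : ℕ} (hp : p.Prime) (hk : 2 ≤ k) : Ff s (p ^ k) = 0 := by
  rw [Ff_apply, Af_apply, if_neg, zero_mul]
  rw [Nat.squarefree_pow_iff hp.ne_one (by omega)]
  rintro ⟨-, rfl⟩
  omega

lemma zetaFf_prime_pow {p k : ℕ} (hp : p.Prime) (hk : 1 ≤ k) :
    ((ζ : ArithmeticFunction ℝ) * Ff s) (p ^ k) = 1 + Ff s p := by
  rw [coe_zeta_mul_apply, Nat.sum_divisors_prime_pow hp]
  have hsub : ({0, 1} : Finset ℕ) ⊆ Finset.range (k + 1) := by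
    intro i hi
    simp only [Finset.mem_insert, Finset.mem_singleton] at hi
    rcases hi with rfl | rfl <;> simp only [Finset.mem_range] <;> omega
  rw [← Finset.sum_subset hsub]
  · rw [Finset.sum_insert (by norm_num), Finset.sum_singleton, pow_zero, pow_one,
      isMultiplicative_Ff.map_one]
  · intro i hi hi'
    simp only [Finset.mem_insert, Finset.mem_singleton, not_or] at hi'
    exact Ff_prime_pow hp (by omega)

lemma sum_divisors_Ff {q : ℕ} (hq : q ≠ 0) :
    ∑ d ∈ q.divisors, Ff s d = ∏ p ∈ q.primeFactors, (1 + Ff s p) := by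
  rw [← coe_zeta_mul_apply,
    (isMultiplicative_zeta.natCast.mul isMultiplicative_Ff).multiplicative_factorization _ hq,
    Nat.prod_factorization_eq_prod_primeFactors]
  apply Finset.prod_congr rfl
  intro p hp
  exact zetaFf_prime_pow (Nat.prime_of_mem_primeFactors hp)
    (Nat.Prime.factorization_pos_of_dvd (Nat.prime_of_mem_primeFactors hp) hq
      (Nat.dvd_of_mem_primeFactors hp))

lemma Ff_prime {p : ℕ} (hp : p.Prime) :
    Ff s p = (p:ℝ) ^ s / ((p:ℝ) - 1) * (1 + (p:ℝ) ^ (-s)) := by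
  rw [Ff_apply, Af_apply, if_pos hp.squarefree, hp.divisors,
    Finset.sum_insert (by simpa using hp.ne_one.symm), Finset.sum_singleton,
    Bf_apply, Bf_apply, if_pos squarefree_one, if_pos hp.squarefree,
    Nat.totient_prime hp, Nat.cast_sub hp.one_lt.le]
  push_cast
  rw [Real.one_rpow]

lemma Ff_prime_nonneg {p : ℕ} (hp : p.Prime) : 0 ≤ Ff s p := by
  rw [Ff_prime hp]
  have h1 : (1:ℝ) < (p:ℝ) := by exact_mod_cast hp.one_lt
  have := Real.rpow_nonneg (by positivity : (0:ℝ) ≤ (p:ℝ)) s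
  have := Real.rpow_nonneg (by positivity : (0:ℝ) ≤ (p:ℝ)) (-s)
  have h2 : (0:ℝ) < (p:ℝ) - 1 := by linarith
  positivity

lemma Ff_prime_bound {p : ℕ} (hp : p.Prime) :
    1 + Ff s p ≤ 2 * (1 + (p:ℝ) ^ (s - 1)) := by
  rw [Ff_prime hp]
  set pr := (p:ℝ) with hpr
  have hp2 : (2:ℝ) ≤ pr := by rw [hpr]; exact_mod_cast hp.two_le
  have hp0 : (0:ℝ) < pr := by linarith
  have hx : (0:ℝ) < pr ^ s := Real.rpow_pos_of_pos hp0 s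
  set x := pr ^ s with hxdef
  have hinv : pr ^ (-s) = x⁻¹ := by rw [Real.rpow_neg hp0.le]
  have hsub : pr ^ (s - 1) = x / pr := by
    rw [Real.rpow_sub hp0, Real.rpow_one]
  rw [hinv, hsub]
  have hA : 1 + x / (pr - 1) * (1 + x⁻¹) = (pr + x)/(pr - 1) := by
    rw [div_mul_eq_mul_div, mul_add, mul_inv_cancel₀ hx.ne', mul_one]
    rw [eq_div_iff (by linarith : pr - 1 ≠ 0), add_mul,
      div_mul_cancel₀ _ (by linarith : pr - 1 ≠ 0)]
    ring
  have hB : 2*(1 + x / pr) = 2*(pr + x)/pr := by field_simp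
  rw [hA, hB, div_le_div_iff₀ (by linarith : (0:ℝ) < pr - 1) hp0]
  nlinarith [mul_nonneg (by linarith : (0:ℝ) ≤ pr + x) (by linarith : (0:ℝ) ≤ pr - 2)]

lemma aux_dvd {q d e : ℕ} (hq : q ≠ 0) (hd : d ∣ q) (he : e ∣ d) : q * e / d ∣ q := by
  obtain ⟨k, hk⟩ := hd
  obtain ⟨f, hf⟩ := he
  have hd0 : d ≠ 0 := by
    rintro rfl
    exact hq (by rw [hk, zero_mul])
  have heq : q * e / d = k * e := by
    rw [hk, show d * k * e = d * (k * e) by ring,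
      Nat.mul_div_cancel_left _ (Nat.pos_of_ne_zero hd0)]
  rw [heq, hk, hf]
  exact ⟨f, by ring⟩

lemma outer_coef (z : ℂ) {d : ℕ} (hd0 : 0 < d) :
    ‖((μ d : ℤ) : ℂ) * (d:ℂ)^z / (Nat.totient d : ℂ)‖ = Af z.re d := by
  have hdpos : (0:ℝ) < (d:ℝ) := by exact_mod_cast hd0
  have habs : ‖(d:ℂ) ^ z‖ = (d:ℝ) ^ z.re := by
    rw [show ((d:ℂ)) = (((d:ℝ)):ℂ) from (Complex.ofReal_natCast d).symm,
      Complex.norm_cpow_eq_rpow_re_of_pos hdpos]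
  rw [norm_div, norm_mul, Complex.norm_intCast, Complex.norm_natCast, habs]
  by_cases h : Squarefree d
  · rw [show |((μ d : ℤ) : ℝ)| = (((|μ d| : ℤ)) : ℝ) from Int.cast_abs.symm,
      ArithmeticFunction.abs_moebius_eq_one_of_squarefree h, Af_apply, if_pos h]
    norm_num
  · rw [ArithmeticFunction.moebius_eq_zero_of_not_squarefree h, Af_apply, if_neg h]
    norm_num

lemma inner_piece (z : ℂ) {q d : ℕ} (hq : q ≠ 0) (hd : d ∈ q.divisors) :
    ‖∑ e ∈ d.divisors, ((μ e : ℤ) : ℂ) / (e:ℂ)^z * g4 z (q * e / d)‖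
      ≤ (∑ e ∈ d.divisors, Bf z.re e) *
        ((tau4 q : ℝ) * ∏ p ∈ q.primeFactors, (1 + (p:ℝ) ^ (-z.re))^3) := by
  set C := (tau4 q : ℝ) * ∏ p ∈ q.primeFactors, (1 + (p:ℝ) ^ (-z.re))^3 with hCdef
  have hC0 : 0 ≤ C :=
    mul_nonneg (Nat.cast_nonneg _) (Finset.prod_nonneg fun p _ => by positivity)
  refine (norm_sum_le _ _).trans ?_
  rw [Finset.sum_mul]
  apply Finset.sum_le_sum
  intro e he
  have hdq : d ∣ q := (Nat.mem_divisors.mp hd).1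
  have hed : e ∣ d := (Nat.mem_divisors.mp he).1
  have he0 : 0 < e := Nat.pos_of_mem_divisors he
  have hepos : (0:ℝ) < (e:ℝ) := by exact_mod_cast he0
  have habs : ‖(e:ℂ) ^ z‖ = (e:ℝ) ^ z.re := by
    rw [show ((e:ℂ)) = (((e:ℝ)):ℂ) from (Complex.ofReal_natCast e).symm,
      Complex.norm_cpow_eq_rpow_re_of_pos hepos]
  rw [norm_mul, norm_div, Complex.norm_intCast, habs]
  by_cases h : Squarefree e
  · rw [show |((μ e : ℤ) : ℝ)| = (((|μ e| : ℤ)) : ℝ) from Int.cast_abs.symm,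
      ArithmeticFunction.abs_moebius_eq_one_of_squarefree h]
    rw [Bf_apply, if_pos h]
    have hrw : ((1:ℤ):ℝ) / (e:ℝ) ^ z.re = (e:ℝ) ^ (-z.re) := by
      rw [Real.rpow_neg hepos.le]
      norm_num
    rw [hrw]
    exact mul_le_mul_of_nonneg_left (abs_g4_le_of_dvd z hq (aux_dvd hq hdq hed))
      (Real.rpow_nonneg hepos.le _)
  · rw [ArithmeticFunction.moebius_eq_zero_of_not_squarefree h, Bf_apply, if_neg h]
    simp

/-- For all `z ∈ ℂ` and `q ≥ 1`,
`|G₄(z,q)| ≤ 2^{ω(q)} τ₄(q) ∏_{p|q} (1+p^{-Re z})³ (1+p^{Re z - 1})`, and if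
`1 - r ≤ Re z ≤ 1 + r` with `r ∈ (0,1)` then `|G₄(z,q)| ≤ 32^{ω(q)} τ₄(q) q^r`. -/
theorem G4_bounds :
    (∀ (z : ℂ) (q : ℕ), 0 < q →
      ‖G4 z q‖ ≤
        2 ^ q.primeFactors.card * (tau4 q : ℝ) *
          ∏ p ∈ q.primeFactors, (1 + (p:ℝ) ^ (-z.re))^3 * (1 + (p:ℝ) ^ (z.re - 1))) ∧
    (∀ (z : ℂ) (q : ℕ) (r : ℝ), 0 < q → r ∈ Set.Ioo (0:ℝ) 1 →
      1 - r ≤ z.re → z.re ≤ 1 + r →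
      ‖G4 z q‖ ≤ 32 ^ q.primeFactors.card * (tau4 q : ℝ) * (q:ℝ) ^ r) := by
  have part1 : ∀ (z : ℂ) (q : ℕ), 0 < q →
      ‖G4 z q‖ ≤
        2 ^ q.primeFactors.card * (tau4 q : ℝ) *
          ∏ p ∈ q.primeFactors, (1 + (p:ℝ) ^ (-z.re))^3 * (1 + (p:ℝ) ^ (z.re - 1)) := by
    intro z q hq0
    have hq : q ≠ 0 := hq0.ne'
    set C := (tau4 q : ℝ) * ∏ p ∈ q.primeFactors, (1 + (p:ℝ) ^ (-z.re))^3 with hCdef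
    have hC0 : 0 ≤ C :=
      mul_nonneg (Nat.cast_nonneg _) (Finset.prod_nonneg fun p _ => by positivity)
    have step1 : ‖G4 z q‖ ≤ ∑ d ∈ q.divisors, Ff z.re d * C := by
      rw [G4]
      refine (norm_sum_le _ _).trans (Finset.sum_le_sum ?_)
      intro d hd
      rw [norm_mul, outer_coef z (Nat.pos_of_mem_divisors hd), Ff_apply]
      calc Af z.re d * ‖∑ e ∈ d.divisors, ((μ e : ℤ) : ℂ) / (e:ℂ)^z *
              g4 z (q * e / d)‖
          ≤ Af z.re d * ((∑ e ∈ d.divisors, Bf z.re e) * C) :=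
            mul_le_mul_of_nonneg_left (inner_piece z hq hd) (Af_nonneg d)
        _ = Af z.re d * (∑ e ∈ d.divisors, Bf z.re e) * C := (mul_assoc _ _ _).symm
    have step2 : ∑ d ∈ q.divisors, Ff z.re d * C = (∑ d ∈ q.divisors, Ff z.re d) * C :=
      (Finset.sum_mul _ _ _).symm
    have step3 : (∑ d ∈ q.divisors, Ff z.re d) ≤
        2 ^ q.primeFactors.card * ∏ p ∈ q.primeFactors, (1 + (p:ℝ) ^ (z.re - 1)) := by
      rw [sum_divisors_Ff hq]
      calc ∏ p ∈ q.primeFactors, (1 + Ff z.re p)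
          ≤ ∏ p ∈ q.primeFactors, 2 * (1 + (p:ℝ) ^ (z.re - 1)) := by
            apply Finset.prod_le_prod
            · intro p hp
              have := Ff_prime_nonneg (s := z.re) (Nat.prime_of_mem_primeFactors hp)
              linarith
            · intro p hp
              exact Ff_prime_bound (Nat.prime_of_mem_primeFactors hp)
        _ = 2 ^ q.primeFactors.card * ∏ p ∈ q.primeFactors, (1 + (p:ℝ) ^ (z.re - 1)) := by
            rw [Finset.prod_mul_distrib, Finset.prod_const]
    have hprodpos : (0:ℝ) ≤ ∏ p ∈ q.primeFactors, (1 + (p:ℝ) ^ (z.re - 1)) := by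
      apply Finset.prod_nonneg
      intro p hp
      have := Real.rpow_nonneg (Nat.cast_nonneg p) (z.re - 1)
      linarith
    calc ‖G4 z q‖ ≤ (∑ d ∈ q.divisors, Ff z.re d) * C := by
          rw [← step2]; exact step1
      _ ≤ (2 ^ q.primeFactors.card * ∏ p ∈ q.primeFactors, (1 + (p:ℝ) ^ (z.re - 1))) * C :=
          mul_le_mul_of_nonneg_right step3 hC0
      _ = 2 ^ q.primeFactors.card * (tau4 q : ℝ) *
          ∏ p ∈ q.primeFactors, (1 + (p:ℝ) ^ (-z.re))^3 * (1 + (p:ℝ) ^ (z.re - 1)) := by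
          rw [hCdef, Finset.prod_mul_distrib]
          ring
  refine ⟨part1, ?_⟩
  intro z q r hq0 hr hs1 hs2
  obtain ⟨hr0, hr1⟩ := hr
  have hq : q ≠ 0 := hq0.ne'
  refine (part1 z q hq0).trans ?_
  have key : (∏ p ∈ q.primeFactors, (1 + (p:ℝ) ^ (-z.re))^3 * (1 + (p:ℝ) ^ (z.re - 1)))
      ≤ 16 ^ q.primeFactors.card * (q:ℝ) ^ r := by
    have each : ∀ p ∈ q.primeFactors,
        (1 + (p:ℝ) ^ (-z.re))^3 * (1 + (p:ℝ) ^ (z.re - 1)) ≤ 16 * (p:ℝ) ^ r := by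
      intro p hp
      have hpp := Nat.prime_of_mem_primeFactors hp
      have hp1 : (1:ℝ) ≤ (p:ℝ) := by exact_mod_cast hpp.one_lt.le
      have ht0 : (0:ℝ) ≤ (p:ℝ) ^ (-z.re) := Real.rpow_nonneg (by linarith) _
      have ht1 : (p:ℝ) ^ (-z.re) ≤ 1 :=
        Real.rpow_le_one_of_one_le_of_nonpos hp1 (by linarith)
      have hcube : (1 + (p:ℝ) ^ (-z.re))^3 ≤ 8 := by
        have h2 : 1 + (p:ℝ) ^ (-z.re) ≤ 2 := by linarith
        calc (1 + (p:ℝ) ^ (-z.re))^3 ≤ 2^3 := by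
              apply pow_le_pow_left₀ (by linarith) h2
          _ = 8 := by norm_num
      have hu : (p:ℝ) ^ (z.re - 1) ≤ (p:ℝ) ^ r :=
        Real.rpow_le_rpow_of_exponent_le hp1 (by linarith)
      have h1r : (1:ℝ) ≤ (p:ℝ) ^ r := by
        have := Real.rpow_le_rpow_of_exponent_le hp1 (le_of_lt hr0)
        rwa [Real.rpow_zero] at this
      have hu0 : (0:ℝ) ≤ 1 + (p:ℝ) ^ (z.re - 1) := by
        have := Real.rpow_nonneg (by linarith : (0:ℝ) ≤ (p:ℝ)) (z.re - 1)
        linarith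
      calc (1 + (p:ℝ) ^ (-z.re))^3 * (1 + (p:ℝ) ^ (z.re - 1))
          ≤ 8 * (2 * (p:ℝ) ^ r) := by
            apply mul_le_mul hcube _ hu0 (by norm_num)
            linarith
        _ = 16 * (p:ℝ) ^ r := by ring
    calc (∏ p ∈ q.primeFactors, (1 + (p:ℝ) ^ (-z.re))^3 * (1 + (p:ℝ) ^ (z.re - 1)))
        ≤ ∏ p ∈ q.primeFactors, 16 * (p:ℝ) ^ r := by
          apply Finset.prod_le_prod
          · intro p hp
            apply mul_nonneg (by positivity)
            have := Real.rpow_nonneg (Nat.cast_nonneg p) (z.re - 1)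
            linarith
          · exact each
      _ = 16 ^ q.primeFactors.card * ∏ p ∈ q.primeFactors, (p:ℝ) ^ r := by
          rw [Finset.prod_mul_distrib, Finset.prod_const]
      _ ≤ 16 ^ q.primeFactors.card * (q:ℝ) ^ r := by
          apply mul_le_mul_of_nonneg_left _ (by positivity)
          have hprod : (∏ p ∈ q.primeFactors, (p:ℝ) ^ r)
              = ((∏ p ∈ q.primeFactors, p : ℕ) : ℝ) ^ r := by
            rw [Nat.cast_prod, ← Real.finset_prod_rpow _ _ (fun i _ => Nat.cast_nonneg i) r]
          rw [hprod]
          apply Real.rpow_le_rpow (by positivity) _ (le_of_lt hr0)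
          exact_mod_cast Nat.le_of_dvd hq0 (Nat.prod_primeFactors_dvd q)
  calc 2 ^ q.primeFactors.card * (tau4 q : ℝ) *
        ∏ p ∈ q.primeFactors, (1 + (p:ℝ) ^ (-z.re))^3 * (1 + (p:ℝ) ^ (z.re - 1))
      ≤ 2 ^ q.primeFactors.card * (tau4 q : ℝ) * (16 ^ q.primeFactors.card * (q:ℝ) ^ r) :=
        mul_le_mul_of_nonneg_left key (by positivity)
    _ = 32 ^ q.primeFactors.card * (tau4 q : ℝ) * (q:ℝ) ^ r := by
        rw [show (32:ℝ) ^ q.primeFactors.card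
          = 2 ^ q.primeFactors.card * 16 ^ q.primeFactors.card by
            rw [← mul_pow]; norm_num]
        ring

end
end

section
/- For every prime p, every integer j ≥ 1 and every z ∈ ℂ, G₄(z, p^j) = (p/(p−1)) · (τ₄(p^j) Q_j(p^{−z}) − p^{z−1} τ₄(p^{j−1}) Q_{j−1}(p^{−z})), where Q₀(x) = 1 and, for j ≥ 1, Q_j(x) = 1 − (3j/(j+1)) x + (3j/(j+2)) x² − (j/(j+3)) x³. In particular, G₄(z,p) = (p/(p−1))(4 − p^{z−1} − 6p^{−z} + 4p^{−2z} − p^{−3z}) and G₄(z,p²) = (p/(p−1))((10 − 4p^{z−1}) + (−20 + 6p^{z−1})p^{−z} + (15 − 4p^{z−1})p^{−2z} + (−4 + p^{z−1})p^{−3z}). -/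
open Complex Filter Topology

noncomputable section

section helpers
open Finset Complex

lemma natCard_eq_filter' {α : Type*} (P : α → Prop) [DecidablePred P] (F : Finset α)
    (h : ∀ a, P a ↔ a ∈ F) : Nat.card {a // P a} = F.card := by
  have : {a | P a} = ↑F := by ext a; simp [h]
  calc Nat.card {a // P a} = Nat.card {a | P a} := rfl
    _ = ({a | P a} : Set α).ncard := Nat.card_coe_set_eq _
    _ = F.card := by rw [this, Set.ncard_coe_finset]

lemma card_sum_eq' (k : ℕ) (hk : k ≤ 2) :
    Nat.card {v : ℕ × ℕ × ℕ × ℕ // v.1 + v.2.1 + v.2.2.1 + v.2.2.2 = k} = (k + 3).choose 3 := by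
  rw [natCard_eq_filter' _ ((range (k+1) ×ˢ range (k+1) ×ˢ range (k+1) ×ˢ range (k+1)).filter
    (fun v => v.1 + v.2.1 + v.2.2.1 + v.2.2.2 = k))]
  · interval_cases k <;> decide
  · intro ⟨a,b,c,d⟩
    simp only [mem_filter, mem_product, mem_range]
    omega

lemma eq_pow_factorization' {p k a : ℕ} (hp : p.Prime) (ha : a ∣ p ^ k) :
    p ^ a.factorization p = a := by
  obtain ⟨i, hi, rfl⟩ := (Nat.dvd_prime_pow hp).mp ha
  rw [hp.factorization_pow, Finsupp.single_eq_same]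

lemma fact_pow' {p : ℕ} (hp : p.Prime) (i : ℕ) : (p ^ i).factorization p = i := by
  rw [hp.factorization_pow, Finsupp.single_eq_same]

lemma tau4_pow' {p : ℕ} (hp : p.Prime) (k : ℕ) :
    tau4 (p ^ k) = Nat.card {v : ℕ × ℕ × ℕ × ℕ // v.1 + v.2.1 + v.2.2.1 + v.2.2.2 = k} := by
  apply Nat.card_congr
  refine ⟨fun q => ⟨(q.1.1.factorization p, q.1.2.1.factorization p,
      q.1.2.2.1.factorization p, q.1.2.2.2.factorization p), ?_⟩,
    fun v => ⟨(p ^ v.1.1, p ^ v.1.2.1, p ^ v.1.2.2.1, p ^ v.1.2.2.2), by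
      obtain ⟨⟨a,b,c,d⟩, hv⟩ := v
      simp only at hv ⊢
      rw [← pow_add, ← pow_add, ← pow_add, hv]⟩, ?_, ?_⟩
  · obtain ⟨⟨a,b,c,d⟩, hq⟩ := q
    simp only at hq ⊢
    have hne : p ^ k ≠ 0 := pow_ne_zero k hp.pos.ne'
    have ha : a ≠ 0 := by rintro rfl; simp at hq; exact hne hq.symm
    have hb : b ≠ 0 := by rintro rfl; simp at hq; exact hne hq.symm
    have hc : c ≠ 0 := by rintro rfl; simp at hq; exact hne hq.symm
    have hd : d ≠ 0 := by rintro rfl; simp at hq; exact hne hq.symm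
    have := congrArg (fun n => n.factorization p) hq
    simpa [Nat.factorization_mul, ha, hb, hc, hd, mul_ne_zero,
      Nat.Prime.factorization_self hp] using this
  · rintro ⟨⟨a,b,c,d⟩, hq⟩
    have ha : a ∣ p ^ k := ⟨b*c*d, by rw [← hq]; ring⟩
    have hb : b ∣ p ^ k := ⟨a*c*d, by rw [← hq]; ring⟩
    have hc : c ∣ p ^ k := ⟨a*b*d, by rw [← hq]; ring⟩
    have hd : d ∣ p ^ k := ⟨a*b*c, by rw [← hq]; ring⟩
    simp only [Subtype.mk.injEq, Prod.mk.injEq]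
    exact ⟨eq_pow_factorization' hp ha, eq_pow_factorization' hp hb,
      eq_pow_factorization' hp hc, eq_pow_factorization' hp hd⟩
  · rintro ⟨⟨a,b,c,d⟩, hv⟩
    simp [Nat.Prime.factorization_self hp]

lemma tau4_one' : tau4 1 = 1 := by
  have := tau4_pow' (p := 2) Nat.prime_two 0
  rw [pow_zero] at this
  rw [this, card_sum_eq' 0 (by norm_num)]
  decide

lemma tau4_prime' {p : ℕ} (hp : p.Prime) : tau4 p = 4 := by
  have := tau4_pow' hp 1
  rw [card_sum_eq' 1 (by norm_num)] at this
  simpa using this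

lemma tau4_prime_sq' {p : ℕ} (hp : p.Prime) : tau4 (p ^ 2) = 10 := by
  rw [tau4_pow' hp 2, card_sum_eq' 2 (by norm_num)]; decide

lemma g4_one' (z : ℂ) : g4 z 1 = 1 := by simp [g4]

lemma g4_pow' {p : ℕ} (hp : p.Prime) (z : ℂ) {k : ℕ} (hk : k ≠ 0) :
    g4 z (p ^ k) = (tau4 (p ^ k) : ℂ) * Qpoly k ((p:ℂ) ^ (-z)) := by
  rw [g4, Nat.primeFactors_prime_pow hk hp, Finset.prod_singleton, fact_pow' hp]

lemma G4_pow_raw' {p : ℕ} (hp : p.Prime) (z : ℂ) {j : ℕ} (hj : 1 ≤ j) :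
    G4 z (p ^ j) = g4 z (p ^ j)
      + (-1) * (p:ℂ)^z / ((p:ℂ) - 1) *
        (g4 z (p ^ (j-1)) + (-1) / (p:ℂ)^z * g4 z (p ^ j)) := by
  rw [G4, Nat.divisors_prime_pow hp, Finset.sum_map]
  simp only [Function.Embedding.coeFn_mk]
  rw [← Finset.sum_subset (Finset.range_subset_range.mpr (by omega : 2 ≤ j + 1))
    (by
      intro i _ hi
      rw [Finset.mem_range, not_lt] at hi
      rw [ArithmeticFunction.moebius_apply_prime_pow hp (by omega)]
      rw [if_neg (by omega)]
      simp)]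
  rw [Finset.sum_range_succ, Finset.sum_range_one, pow_zero, pow_one]
  have h1 : (p:ℕ)^j * 1 / 1 = p ^ j := by simp
  have h2 : (p:ℕ)^j * 1 / p = p ^ (j - 1) := by
    rw [mul_one]
    nth_rewrite 1 [show j = (j-1)+1 by omega]
    rw [pow_succ, Nat.mul_div_cancel _ hp.pos]
  have h3 : (p:ℕ)^j * p / p = p ^ j := Nat.mul_div_cancel _ hp.pos
  rw [Nat.divisors_one, hp.divisors]
  rw [show ({1, p} : Finset ℕ) = insert 1 {p} from rfl,
    Finset.sum_insert (by rw [Finset.mem_singleton]; exact hp.one_lt.ne)]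
  simp only [Finset.sum_singleton, h1, h2, h3]
  rw [ArithmeticFunction.moebius_apply_one, ArithmeticFunction.moebius_apply_prime hp]
  have hφ : (Nat.totient p : ℂ) = (p : ℂ) - 1 := by
    rw [Nat.totient_prime hp]
    push_cast [Nat.cast_sub hp.one_lt.le]
    ring
  rw [hφ]
  simp only [one_cpow, Nat.totient_one, Nat.cast_one, inv_one, one_mul]
  push_cast
  ring

lemma G4_pow_main' {p : ℕ} (hp : p.Prime) (z : ℂ) {j : ℕ} (hj : 1 ≤ j) :
    G4 z (p^j) = ((p:ℂ) / ((p:ℂ) - 1)) *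
      ((tau4 (p^j) : ℂ) * Qpoly j ((p:ℂ) ^ (-z)) -
        (p:ℂ) ^ (z-1) * (tau4 (p^(j-1)) : ℂ) * Qpoly (j-1) ((p:ℂ) ^ (-z))) := by
  have hp0 : (p:ℂ) ≠ 0 := Nat.cast_ne_zero.mpr hp.pos.ne'
  have hp1 : (p:ℂ) - 1 ≠ 0 := sub_ne_zero.mpr (by exact_mod_cast hp.one_lt.ne')
  have hpz : (p:ℂ)^z ≠ 0 := by
    rw [Complex.cpow_def_of_ne_zero hp0]; exact Complex.exp_ne_zero _
  have hsub : (p:ℂ)^(z-1) = (p:ℂ)^z / (p:ℂ) := by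
    rw [Complex.cpow_sub _ _ hp0, Complex.cpow_one]
  rw [G4_pow_raw' hp z hj, g4_pow' hp z (by omega : j ≠ 0), hsub]
  rcases Nat.eq_or_lt_of_le hj with h1 | h2
  · rw [← h1]
    simp only [pow_one, Nat.sub_self, pow_zero]
    rw [g4_one']
    have hQ0 : Qpoly 0 ((p:ℂ)^(-z)) = 1 := by simp [Qpoly]
    rw [hQ0, tau4_one', Nat.cast_one]
    field_simp
    ring
  · rw [g4_pow' hp z (by omega : j - 1 ≠ 0)]
    field_simp
    ring

end helpers

/-- For every prime `p`, `j ≥ 1` and `z ∈ ℂ`,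
`G₄(z,p^j) = (p/(p-1)) (τ₄(p^j) Q_j(p^{-z}) - p^{z-1} τ₄(p^{j-1}) Q_{j-1}(p^{-z}))`,
together with the explicit formulas for `G₄(z,p)` and `G₄(z,p²)`. -/
theorem G4_prime_powers :
    ∀ p : ℕ, p.Prime → ∀ z : ℂ,
      (∀ j : ℕ, 1 ≤ j →
        G4 z (p^j) = ((p:ℂ) / ((p:ℂ) - 1)) *
          ((tau4 (p^j) : ℂ) * Qpoly j ((p:ℂ) ^ (-z)) -
            (p:ℂ) ^ (z-1) * (tau4 (p^(j-1)) : ℂ) * Qpoly (j-1) ((p:ℂ) ^ (-z)))) ∧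
      G4 z p = ((p:ℂ) / ((p:ℂ) - 1)) *
        (4 - (p:ℂ) ^ (z-1) - 6 * (p:ℂ) ^ (-z) + 4 * (p:ℂ) ^ (-(2*z)) - (p:ℂ) ^ (-(3*z))) ∧
      G4 z (p^2) = ((p:ℂ) / ((p:ℂ) - 1)) *
        ((10 - 4 * (p:ℂ) ^ (z-1)) + (-20 + 6 * (p:ℂ) ^ (z-1)) * (p:ℂ) ^ (-z) +
          (15 - 4 * (p:ℂ) ^ (z-1)) * (p:ℂ) ^ (-(2*z)) +
          (-4 + (p:ℂ) ^ (z-1)) * (p:ℂ) ^ (-(3*z))) := by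
  intro p hp z
  have hp0 : (p:ℂ) ≠ 0 := Nat.cast_ne_zero.mpr hp.pos.ne'
  have hx2 : (p:ℂ)^(-(2*z)) = ((p:ℂ)^(-z))^2 := by
    rw [show -(2*z) = -z + -z by ring, Complex.cpow_add _ _ hp0]; ring
  have hx3 : (p:ℂ)^(-(3*z)) = ((p:ℂ)^(-z))^3 := by
    rw [show -(3*z) = -z + (-z + -z) by ring, Complex.cpow_add _ _ hp0,
      Complex.cpow_add _ _ hp0]; ring
  refine ⟨fun j hj => G4_pow_main' hp z hj, ?_, ?_⟩
  · have h := G4_pow_main' hp z (le_refl 1)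
    rw [pow_one] at h
    rw [h, tau4_prime' hp, pow_zero, tau4_one', hx2, hx3]
    simp only [Qpoly, Nat.cast_one, Nat.cast_zero]
    norm_num
    exact Or.inl (by ring)
  · have h := G4_pow_main' hp z (by norm_num : 1 ≤ 2)
    rw [h, tau4_prime_sq' hp, show (2:ℕ) - 1 = 1 from rfl, pow_one, tau4_prime' hp,
      hx2, hx3]
    simp only [Qpoly, Nat.cast_one, Nat.cast_ofNat]
    norm_num
    exact Or.inl (by ring)

end
end
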